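/- With notation as above, let W_m be the unique shuffle of W_a and W_c matching ac(ā*ac̄*c)*. The restriction of W_m to the letters {ā, c̄} is a balanced parenthesis word (ā opening, c̄ closing) if and only if for every k with 1 ≤ k ≤ p, the number of ā's to the left of the k-th occurrence of a in W_a is at least the number of c̄'s to the left of the k-th occurrence of c in W_c. -/

import Mathlib

/-- The alphabet `{a, ā, c, c̄}`. -/
inductive Letter : Type
  | a | abar | c | cbar
  deriving DecidableEq

/-- `IsShuffle u v w` : `w` is a shuffle of `u` and `v`. -/
inductive IsShuffle {α : Type*} : List α → List α → List α → Prop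
  | nil : IsShuffle [] [] []
  | left {u v w} (x : α) : IsShuffle u v w → IsShuffle (x :: u) v (x :: w)
  | right {u v w} (y : α) : IsShuffle u v w → IsShuffle u (y :: v) (y :: w)

/-- Words matching `(ā* a c̄* c)*`. -/
inductive Blocks : List Letter → Prop
  | nil : Blocks []
  | cons (r s : ℕ) (t : List Letter) : Blocks t →
      Blocks (List.replicate r Letter.abar ++ [Letter.a] ++
        List.replicate s Letter.cbar ++ [Letter.c] ++ t)

/-- Words matching the regular expression `a c (ā* a c̄* c)*`. -/
def Matches (w : List Letter) : Prop :=
  ∃ t, Blocks t ∧ w = Letter.a :: Letter.c :: t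

/-- The prefix of a word consisting of the letters strictly before the
`k`-th occurrence of `y` (1-indexed). -/
def takeUntilNth {α : Type*} [DecidableEq α] (y : α) : ℕ → List α → List α
  | _, [] => []
  | k, z :: t =>
    if z = y then (if k ≤ 1 then [] else z :: takeUntilNth y (k-1) t)
    else z :: takeUntilNth y k t

namespace MWB

/-- The word corresponding to a list of block-exponent pairs. -/
def BJoin (L : List (ℕ × ℕ)) : List Letter :=
  (L.map (fun rs => List.replicate rs.1 Letter.abar ++ [Letter.a] ++
      List.replicate rs.2 Letter.cbar ++ [Letter.c])).flatten

/-- The restriction of `BJoin L` to the barred letters. -/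
def FOf (L : List (ℕ × ℕ)) : List Letter :=
  (L.map (fun rs => List.replicate rs.1 Letter.abar ++ List.replicate rs.2 Letter.cbar)).flatten

/-- A word of the shape `xb^{n₁} x xb^{n₂} x ⋯`. -/
def GOf (x xb : Letter) (ns : List ℕ) : List Letter :=
  (ns.map (fun n => List.replicate n xb ++ [x])).flatten

def pA (l : Letter) : Bool := l = Letter.a ∨ l = Letter.abar
def pC (l : Letter) : Bool := l = Letter.c ∨ l = Letter.cbar
def pBar (l : Letter) : Bool := l = Letter.abar ∨ l = Letter.cbar

lemma blocks_exists {t : List Letter} (h : Blocks t) : ∃ L, t = BJoin L := by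
  induction h with
  | nil => exact ⟨[], rfl⟩
  | cons r s t ht ih =>
      obtain ⟨L, rfl⟩ := ih
      exact ⟨(r, s) :: L, by simp [BJoin]⟩

lemma shuffle_filter {α : Type*} {u v w : List α} (pA pC : α → Bool)
    (h : IsShuffle u v w) (hu : ∀ l ∈ u, pA l = true ∧ pC l = false)
    (hv : ∀ l ∈ v, pC l = true ∧ pA l = false) :
    u = w.filter pA ∧ v = w.filter pC := by
  induction h with
  | nil => simp
  | left x h ih =>
      obtain ⟨h1, h2⟩ := hu x (by simp)
      obtain ⟨ih1, ih2⟩ := ih (fun l hl => hu l (by simp [hl])) hv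
      simp [List.filter_cons, h1, h2, ← ih1, ← ih2]
  | right y h ih =>
      obtain ⟨h1, h2⟩ := hv y (by simp)
      obtain ⟨ih1, ih2⟩ := ih hu (fun l hl => hv l (by simp [hl]))
      simp [List.filter_cons, h1, h2, ← ih1, ← ih2]

lemma filter_pBar_BJoin (L : List (ℕ × ℕ)) : (BJoin L).filter pBar = FOf L := by
  induction L with
  | nil => rfl
  | cons rs L ih =>
      simp [BJoin, FOf, List.filter_append, List.filter_replicate, pBar] at *
      simp [ih]

lemma filter_pA_BJoin (L : List (ℕ × ℕ)) :
    (BJoin L).filter pA = GOf Letter.a Letter.abar (L.map Prod.fst) := by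
  induction L with
  | nil => rfl
  | cons rs L ih =>
      simp [BJoin, GOf, List.filter_append, List.filter_replicate, pA] at *
      simp [ih]

lemma filter_pC_BJoin (L : List (ℕ × ℕ)) :
    (BJoin L).filter pC = GOf Letter.c Letter.cbar (L.map Prod.snd) := by
  induction L with
  | nil => rfl
  | cons rs L ih =>
      simp [BJoin, GOf, List.filter_append, List.filter_replicate, pC] at *
      simp [ih]

lemma count_x_GOf (x xb : Letter) (h : xb ≠ x) (ns : List ℕ) :
    (GOf x xb ns).count x = ns.length := by
  induction ns with
  | nil => rfl
  | cons n ns ih =>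
      simp only [GOf, List.map_cons, List.flatten_cons, List.append_assoc,
        List.count_append, List.count_replicate, List.singleton_append,
        List.count_cons] at *
      simp [ih, h, Ne.symm h]

lemma count_xb_GOf (x xb : Letter) (h : x ≠ xb) (ns : List ℕ) :
    (GOf x xb ns).count xb = ns.sum := by
  induction ns with
  | nil => rfl
  | cons n ns ih =>
      simp only [GOf, List.map_cons, List.flatten_cons, List.append_assoc,
        List.count_append, List.count_replicate, List.singleton_append,
        List.count_cons] at *
      simp [ih, h, Ne.symm h]

lemma count_abar_FOf (L : List (ℕ × ℕ)) :
    (FOf L).count Letter.abar = (L.map Prod.fst).sum := by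
  induction L with
  | nil => rfl
  | cons rs L ih => simp [FOf, List.count_append, List.count_replicate, ih] at *

lemma count_cbar_FOf (L : List (ℕ × ℕ)) :
    (FOf L).count Letter.cbar = (L.map Prod.snd).sum := by
  induction L with
  | nil => rfl
  | cons rs L ih => simp [FOf, List.count_append, List.count_replicate, ih] at *

lemma tun_append {y : Letter} {l : List Letter} (hl : y ∉ l) (k : ℕ) (u : List Letter) :
    takeUntilNth y k (l ++ u) = l ++ takeUntilNth y k u := by
  induction l with
  | nil => rfl
  | cons z l ih =>
      have hz : ¬ z = y := fun h => hl (h ▸ (List.mem_cons_self : z ∈ z :: l))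
      simp only [List.cons_append, takeUntilNth, if_neg hz, List.append_eq]
      rw [ih (fun h => hl (List.mem_cons_of_mem _ h))]

lemma cnt_tun_GOf (x xb : Letter) (hne : x ≠ xb) (ns : List ℕ) (k : ℕ) :
    (takeUntilNth x (k+1) (GOf x xb ns)).count xb = (ns.take (k+1)).sum := by
  induction ns generalizing k with
  | nil => simp [GOf, takeUntilNth]
  | cons n ns ih =>
      have hrep : x ∉ List.replicate n xb := by
        intro h; exact hne (List.eq_of_mem_replicate h)
      rw [show GOf x xb (n :: ns) = List.replicate n xb ++ (x :: GOf x xb ns) from by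
        simp [GOf]]
      rw [tun_append hrep]
      rcases k with _ | k
      · simp [takeUntilNth, List.count_append, List.count_replicate]
      · rw [show takeUntilNth x (k+1+1) (x :: GOf x xb ns)
            = x :: takeUntilNth x (k+1) (GOf x xb ns) from by
          simp [takeUntilNth]]
        simp [List.count_append, List.count_replicate, List.count_cons, hne, Ne.symm hne, ih]

lemma cnt_tun_word (x xb : Letter) (hne : x ≠ xb) (ns : List ℕ) (k : ℕ) (hk : 1 ≤ k) :
    (takeUntilNth x k (x :: GOf x xb ns)).count xb = (ns.take (k-1)).sum := by
  rcases k with _ | k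
  · omega
  rcases k with _ | k
  · simp [takeUntilNth]
  · rw [show takeUntilNth x (k+1+1) (x :: GOf x xb ns)
        = x :: takeUntilNth x (k+1) (GOf x xb ns) from by
      simp [takeUntilNth]]
    simp [List.count_cons, hne, hne.symm, cnt_tun_GOf x xb hne]

lemma FOf_append (L1 L2 : List (ℕ × ℕ)) : FOf (L1 ++ L2) = FOf L1 ++ FOf L2 := by
  simp [FOf]

/-- Backward: block-boundary inequalities imply all-prefix inequalities. -/
lemma bal_of : ∀ (L : List (ℕ × ℕ)) (a0 c0 : ℕ),
    (∀ j, c0 + ((L.take j).map Prod.snd).sum ≤ a0 + ((L.take j).map Prod.fst).sum) →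
    ∀ t, c0 + ((FOf L).take t).count Letter.cbar ≤ a0 + ((FOf L).take t).count Letter.abar := by
  intro L
  induction L with
  | nil =>
      intro a0 c0 h t
      simpa [FOf] using h 0
  | cons rs L ih =>
      obtain ⟨r, s⟩ := rs
      intro a0 c0 h t
      have h0 : c0 ≤ a0 := by simpa using h 0
      have h1 : c0 + s ≤ a0 + r := by simpa using h 1
      have hrec : ∀ j, (c0 + s) + ((L.take j).map Prod.snd).sum
          ≤ (a0 + r) + ((L.take j).map Prod.fst).sum := by
        intro j
        have := h (j+1)
        simpa [add_assoc] using this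
      have key := ih (a0 + r) (c0 + s) hrec (t - r - s)
      have hF : FOf ((r, s) :: L)
          = List.replicate r Letter.abar ++ (List.replicate s Letter.cbar ++ FOf L) := by
        simp [FOf]
      rw [hF]
      rw [List.take_append, List.take_append]
      simp only [List.count_append, List.take_replicate, List.count_replicate,
        List.length_replicate, beq_iff_eq, reduceCtorEq, if_false, if_pos rfl, if_true]
      rcases le_or_gt t (r + s) with hts | hts
      · have hz : t - r - s = 0 := by omega
        rw [hz] at *
        simp only [List.take_zero, List.count_nil] at *
        omega
      · omega

/-- Forward: all-prefix inequalities imply block-boundary inequalities. -/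
lemma bal_to (L : List (ℕ × ℕ))
    (h : ∀ t, ((FOf L).take t).count Letter.cbar ≤ ((FOf L).take t).count Letter.abar) :
    ∀ j, ((L.take j).map Prod.snd).sum ≤ ((L.take j).map Prod.fst).sum := by
  intro j
  have hsplit : FOf L = FOf (L.take j) ++ FOf (L.drop j) := by
    rw [← FOf_append, List.take_append_drop]
  have := h (FOf (L.take j)).length
  rw [hsplit, List.take_left] at this
  rwa [count_abar_FOf, count_cbar_FOf] at this

end MWB

/-- The restriction of the shuffle `W_m` (matching `a c (ā* a c̄* c)*`) to `{ā, c̄}`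
is a balanced parenthesis word (`ā` opening, `c̄` closing) iff for every
`1 ≤ k ≤ p` the number of `ā`'s left of the `k`-th `a` in `W_a` is at least the
number of `c̄`'s left of the `k`-th `c` in `W_c`. -/
theorem matching_word_balanced_iff (p q : ℕ) (hp : 1 ≤ p) (Wa Wc Wm : List Letter)
    (haAlpha : ∀ l ∈ Wa, l = Letter.a ∨ l = Letter.abar)
    (hcAlpha : ∀ l ∈ Wc, l = Letter.c ∨ l = Letter.cbar)
    (ha1 : Wa.count Letter.a = p) (ha2 : Wa.count Letter.abar = q)
    (hc1 : Wc.count Letter.c = p) (hc2 : Wc.count Letter.cbar = q)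
    (hstarta : Wa.head? = some Letter.a) (hstartc : Wc.head? = some Letter.c)
    (hshuffle : IsShuffle Wa Wc Wm) (hmatch : Matches Wm) :
    (((Wm.filter (fun l => l = Letter.abar ∨ l = Letter.cbar)).count Letter.abar =
        (Wm.filter (fun l => l = Letter.abar ∨ l = Letter.cbar)).count Letter.cbar) ∧
      (∀ t : ℕ,
        ((Wm.filter (fun l => l = Letter.abar ∨ l = Letter.cbar)).take t).count Letter.cbar ≤
        ((Wm.filter (fun l => l = Letter.abar ∨ l = Letter.cbar)).take t).count Letter.abar))
      ↔
    (∀ k : ℕ, 1 ≤ k → k ≤ p →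
      (takeUntilNth Letter.c k Wc).count Letter.cbar ≤
        (takeUntilNth Letter.a k Wa).count Letter.abar) := by
  classical
  obtain ⟨tl, hb, rfl⟩ := hmatch
  obtain ⟨L, rfl⟩ := MWB.blocks_exists hb
  set rs : List ℕ := L.map Prod.fst with hrs
  set ss : List ℕ := L.map Prod.snd with hss
  -- the shuffle is forced
  have hu : ∀ l ∈ Wa, MWB.pA l = true ∧ MWB.pC l = false := by
    intro l hl; rcases haAlpha l hl with rfl | rfl <;> exact ⟨rfl, rfl⟩
  have hv : ∀ l ∈ Wc, MWB.pC l = true ∧ MWB.pA l = false := by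
    intro l hl; rcases hcAlpha l hl with rfl | rfl <;> exact ⟨rfl, rfl⟩
  obtain ⟨hWa, hWc⟩ := MWB.shuffle_filter MWB.pA MWB.pC hshuffle hu hv
  have hWa' : Wa = Letter.a :: MWB.GOf Letter.a Letter.abar rs := by
    rw [hWa]
    simp only [List.filter_cons, show MWB.pA Letter.a = true from rfl,
      show MWB.pA Letter.c = false from rfl, Bool.false_eq_true, if_true, if_false, cond_true, cond_false]
    rw [MWB.filter_pA_BJoin]
  have hWc' : Wc = Letter.c :: MWB.GOf Letter.c Letter.cbar ss := by
    rw [hWc]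
    simp only [List.filter_cons, show MWB.pC Letter.a = false from rfl,
      show MWB.pC Letter.c = true from rfl, Bool.false_eq_true, if_true, if_false, cond_true, cond_false]
    rw [MWB.filter_pC_BJoin]
  -- identify the barred restriction
  have hfil : (Letter.a :: Letter.c :: MWB.BJoin L).filter
      (fun l => decide (l = Letter.abar ∨ l = Letter.cbar)) = MWB.FOf L := by
    have hfun : (fun l => decide (l = Letter.abar ∨ l = Letter.cbar)) = MWB.pBar := by
      funext l; cases l <;> rfl
    rw [hfun]
    simp only [List.filter_cons, show MWB.pBar Letter.a = false from rfl,
      show MWB.pBar Letter.c = false from rfl, Bool.false_eq_true, if_false, cond_false]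
    exact MWB.filter_pBar_BJoin L
  rw [hfil]
  -- numeric consequences of the hypotheses
  have hane : Letter.a ≠ Letter.abar := by decide
  have hcne : Letter.c ≠ Letter.cbar := by decide
  have hpL : p = L.length + 1 := by
    rw [hWa'] at ha1
    simp [List.count_cons, MWB.count_x_GOf _ _ (Ne.symm hane), hrs] at ha1
    omega
  have hq1 : rs.sum = q := by
    rw [hWa'] at ha2
    simpa [List.count_cons, hane, MWB.count_xb_GOf _ _ hane] using ha2
  have hq2 : ss.sum = q := by
    rw [hWc'] at hc2
    simpa [List.count_cons, hcne, MWB.count_xb_GOf _ _ hcne] using hc2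
  constructor
  · rintro ⟨-, hpre⟩ k hk1 hkp
    rw [hWa', hWc', MWB.cnt_tun_word _ _ hane rs k hk1, MWB.cnt_tun_word _ _ hcne ss k hk1]
    have := MWB.bal_to L hpre (k - 1)
    simpa [List.map_take, ← hrs, ← hss] using this
  · intro hR
    have hR' : ∀ j, ((L.take j).map Prod.snd).sum ≤ ((L.take j).map Prod.fst).sum := by
      intro j
      rcases le_or_gt j L.length with hj | hj
      · have := hR (j + 1) (by omega) (by omega)
        rw [hWa', hWc', MWB.cnt_tun_word _ _ hane rs (j+1) (by omega),
          MWB.cnt_tun_word _ _ hcne ss (j+1) (by omega)] at this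
        simpa [List.map_take, ← hrs, ← hss] using this
      · have hLt : L.take j = L := List.take_of_length_le (by omega)
        have := hR (L.length + 1) (by omega) (by omega)
        rw [hWa', hWc', MWB.cnt_tun_word _ _ hane rs (L.length+1) (by omega),
          MWB.cnt_tun_word _ _ hcne ss (L.length+1) (by omega)] at this
        have hrt : rs.take L.length = rs := List.take_of_length_le (by simp [hrs])
        have hst : ss.take L.length = ss := List.take_of_length_le (by simp [hss])
        rw [hLt]
        simpa [hrt, hst, ← hrs, ← hss] using this
    constructor
    · rw [MWB.count_abar_FOf, MWB.count_cbar_FOf, ← hrs, ← hss, hq1, hq2]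
    · intro t
      have := MWB.bal_of L 0 0 (by simpa using hR') t
      simpa using this
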